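/- Suppose E[κ_Ẍ(Ẍ,Ẍ)] < ∞, E[κ_Ÿ(Ÿ,Ÿ)] < ∞, E[κ_Z(Z,Z)] < ∞, and that for every g ∈ G_Ẍ the function z ↦ E[g(Ẍ)|Z=z] has a version in G_Z and for every g ∈ G_Ÿ the function z ↦ E[g(Ÿ)|Z=z] has a version in G_Z. If X and Y are conditionally independent given Z, then Σ_{ẌŸ|Z} = 0. (No characteristic-kernel assumption is needed for this direction.) -/

import Mathlib

/-!
# Statement 7

Conjoined variables `Ẍ = (X,Z)`, `Ÿ = (Y,Z)` carry the product kernels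
`κ_Ẍ = κ_X κ_Z`, `κ_Ÿ = κ_Y κ_Z`.  Under the moment assumptions and the
conditional-expectation assumption for `G_Ẍ` and `G_Ÿ`, if `X ⟂⟂ Y | Z`
then the conjoined conditional covariance operator
`Σ_{ẌŸ|Z} = Σ_{ẌŸ} − Σ_{ẌZ}Σ_ZZ^†Σ_{ZŸ}` vanishes.  No characteristic-kernel
assumption is needed for this direction.
-/

open MeasureTheory ProbabilityTheory Filter
open scoped RealInnerProductSpace

noncomputable section

/-- The rank-one operator `u ⊗ v : H₂ → H₁`, `w ↦ ⟪v, w⟫ u`. -/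
def rankOne {H1 H2 : Type*} [NormedAddCommGroup H1] [InnerProductSpace ℝ H1]
    [NormedAddCommGroup H2] [InnerProductSpace ℝ H2] (u : H1) (v : H2) : H2 →L[ℝ] H1 :=
  (innerSL ℝ v).smulRight u

variable {Ω : Type*} [MeasurableSpace Ω]

/-- The mean element `μ = E[k(·,X)] ∈ G` (Bochner integral). -/
def meanElem {H G : Type*} [NormedAddCommGroup G] [InnerProductSpace ℝ G] [CompleteSpace G]
    (P : Measure Ω) (k : H → G) (X : Ω → H) : G :=
  ∫ ω, k (X ω) ∂P

/-- The centered kernel section `κ̃(·,x) = κ(·,x) − μ`. -/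
def ctrKer {H G : Type*} [NormedAddCommGroup G] [InnerProductSpace ℝ G] [CompleteSpace G]
    (P : Measure Ω) (k : H → G) (X : Ω → H) (x : H) : G :=
  k x - meanElem P k X

/-- The (cross-)covariance operator `Σ_{XZ} = E[κ̃_X(·,X) ⊗ κ̃_Z(·,Z)] : G₂ → G₁`. -/
def crossCov {H1 G1 H2 G2 : Type*}
    [NormedAddCommGroup G1] [InnerProductSpace ℝ G1] [CompleteSpace G1]
    [NormedAddCommGroup G2] [InnerProductSpace ℝ G2] [CompleteSpace G2]
    (P : Measure Ω) (k1 : H1 → G1) (X : Ω → H1) (k2 : H2 → G2) (Z : Ω → H2) :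
    G2 →L[ℝ] G1 :=
  ∫ ω, rankOne (ctrKer P k1 X (X ω)) (ctrKer P k2 Z (Z ω)) ∂P

/-- The Penrose axioms characterizing the Moore–Penrose inverse `dag` of a
self-adjoint operator `C`. -/
def IsMoorePenroseInv {G : Type*} [NormedAddCommGroup G] [InnerProductSpace ℝ G]
    (C : G →L[ℝ] G) (dag : G →ₗ[ℝ] G) : Prop :=
  (∀ f, C (dag (C f)) = C f) ∧ (∀ f, dag (C (dag f)) = dag f) ∧
    (∀ f g, ⟪C (dag f), g⟫ = ⟪f, C (dag g)⟫) ∧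
    (∀ f g, ⟪dag (C f), g⟫ = ⟪f, dag (C g)⟫)

/-- Conditional independence of `X` and `Y` given the σ-field `mZ`:
for all Borel sets `A`, `B`, `P(X∈A, Y∈B | Z) = P(X∈A | Z)·P(Y∈B | Z)` a.s. -/
def CondIndepGiven {HX HY : Type*} [MeasurableSpace HX] [MeasurableSpace HY]
    (P : Measure Ω) (mZ : MeasurableSpace Ω) (X : Ω → HX) (Y : Ω → HY) : Prop :=
  ∀ (A : Set HX) (B : Set HY), MeasurableSet A → MeasurableSet B →
    condExp mZ P
        (fun ω => A.indicator (fun _ => (1 : ℝ)) (X ω) *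
          B.indicator (fun _ => (1 : ℝ)) (Y ω))
      =ᵐ[P]
    fun ω => condExp mZ P (fun ω' => A.indicator (fun _ => (1 : ℝ)) (X ω')) ω *
      condExp mZ P (fun ω' => B.indicator (fun _ => (1 : ℝ)) (Y ω')) ω


section Helpers
set_option linter.unusedSectionVars false
set_option linter.unusedVariables false
set_option maxHeartbeats 1000000

variable {Ω' : Type*} [m0 : MeasurableSpace Ω'] {P : Measure Ω'} [IsProbabilityMeasure P]

lemma mul_int2 {f g : Ω' → ℝ} (hf : MemLp f 2 P) (hg : MemLp g 2 P) :
    Integrable (fun ω => f ω * g ω) P := by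
  have h := memLp_one_iff_integrable.mp
    (hg.smul (φ := f) (r := 1) hf (hpqr := ⟨by simp [ENNReal.inv_two_add_inv_two]⟩))
  exact h

lemma smul_int2 {G : Type*} [NormedAddCommGroup G] [InnerProductSpace ℝ G] [CompleteSpace G]
    {f : Ω' → ℝ} {g : Ω' → G} (hf : MemLp f 2 P) (hg : MemLp g 2 P) :
    Integrable (fun ω => f ω • g ω) P :=
  memLp_one_iff_integrable.mp (hg.smul (φ := f) (r := 1) hf (hpqr := ⟨by simp [ENNReal.inv_two_add_inv_two]⟩))

lemma inner_mem2 {G : Type*} [NormedAddCommGroup G] [InnerProductSpace ℝ G] [CompleteSpace G]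
    {g : Ω' → G} (hg : MemLp g 2 P) (u : G) : MemLp (fun ω => ⟪g ω, u⟫) 2 P := by
  simpa [real_inner_comm] using hg.const_inner u

lemma mem2_of_inner_self {H G : Type*} [NormedAddCommGroup G] [InnerProductSpace ℝ G]
    [CompleteSpace G] [SecondCountableTopology G] [MeasurableSpace G] [BorelSpace G]
    [MeasurableSpace H] {k : H → G} {T : Ω' → H} (hk : Measurable k) (hT : Measurable T)
    (h : Integrable (fun ω => ⟪k (T ω), k (T ω)⟫) P) :
    MemLp (fun ω => k (T ω)) 2 P := by
  refine (memLp_two_iff_integrable_sq_norm (hk.comp hT).aestronglyMeasurable).2 ?_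
  refine h.congr (Eventually.of_forall fun ω => ?_)
  show ⟪k (T ω), k (T ω)⟫ = ‖(k ∘ T) ω‖ ^ 2
  rw [Function.comp_apply, real_inner_self_eq_norm_sq]

lemma eq_zero_of_orth {H G : Type*} [NormedAddCommGroup G] [InnerProductSpace ℝ G]
    [CompleteSpace G] {k : H → G}
    (hd : (Submodule.span ℝ (Set.range k)).topologicalClosure = ⊤) {x : G}
    (h : ∀ p, ⟪k p, x⟫ = 0) : x = 0 := by
  have hx : x ∈ (Submodule.span ℝ (Set.range k))ᗮ := by
    intro u hu
    induction hu using Submodule.span_induction with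
    | mem y hy => obtain ⟨p, rfl⟩ := hy; exact h p
    | zero => simp
    | add y z _ _ hy hz => rw [inner_add_left, hy, hz, add_zero]
    | smul c y _ hy => rw [inner_smul_left, hy, mul_zero]
  rw [Submodule.topologicalClosure_eq_top_iff.mp hd] at hx
  simpa using hx

lemma integral_mul_sub_consts {f g : Ω' → ℝ} (hf : MemLp f 2 P) (hg : MemLp g 2 P) :
    ∫ ω, (f ω - ∫ ω', f ω' ∂P) * (g ω - ∫ ω', g ω' ∂P) ∂P =
      (∫ ω, f ω * g ω ∂P) - (∫ ω, f ω ∂P) * ∫ ω, g ω ∂P := by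
  set c1 := ∫ ω', f ω' ∂P
  set c2 := ∫ ω', g ω' ∂P
  have hfg := mul_int2 hf hg
  have hfi : Integrable f P := hf.integrable one_le_two
  have hgi : Integrable g P := hg.integrable one_le_two
  have I1 : Integrable (fun ω => f ω * g ω - c1 * g ω) P := hfg.sub (hgi.const_mul c1)
  have I2 : Integrable (fun ω => c2 * f ω - c1 * c2) P :=
    (hfi.const_mul c2).sub (integrable_const _)
  calc ∫ ω, (f ω - c1) * (g ω - c2) ∂P
      = ∫ ω, (f ω * g ω - c1 * g ω) - (c2 * f ω - c1 * c2) ∂P :=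
        integral_congr_ae (Eventually.of_forall fun ω => by ring)
    _ = (∫ ω, (f ω * g ω - c1 * g ω) ∂P) - ∫ ω, (c2 * f ω - c1 * c2) ∂P :=
        integral_sub I1 I2
    _ = ((∫ ω, f ω * g ω ∂P) - ∫ ω, c1 * g ω ∂P) -
          ((∫ ω, c2 * f ω ∂P) - ∫ ω, (c1 * c2 : ℝ) ∂P) := by
        rw [integral_sub hfg (hgi.const_mul c1), integral_sub (hfi.const_mul c2)
          (integrable_const _)]
    _ = (∫ ω, f ω * g ω ∂P) - c1 * c2 := by
        rw [integral_const_mul, integral_const_mul, integral_const]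
        simp [measure_univ]
        ring

section RK
variable {H1 H2 : Type*} [NormedAddCommGroup H1] [InnerProductSpace ℝ H1]
    [NormedAddCommGroup H2] [InnerProductSpace ℝ H2]

lemma norm_rankOne (u : H1) (v : H2) : ‖rankOne u v‖ = ‖v‖ * ‖u‖ := by
  rw [rankOne, ContinuousLinearMap.norm_smulRight_apply, innerSL_apply_norm]

lemma continuous_rankOne : Continuous (fun p : H1 × H2 => rankOne p.1 p.2) := by
  have h1 : Continuous (fun p : H1 × H2 =>
      ((ContinuousLinearMap.smulRightL ℝ H2 H1) (innerSL ℝ p.2), p.1)) :=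
    ((ContinuousLinearMap.smulRightL ℝ H2 H1).continuous.comp
      ((innerSL ℝ).continuous.comp continuous_snd)).prodMk continuous_fst
  exact isBoundedBilinearMap_apply.continuous.comp h1
end RK

section CC
variable {H1 G1 H2 G2 : Type*}
    [NormedAddCommGroup G1] [InnerProductSpace ℝ G1] [CompleteSpace G1]
    [NormedAddCommGroup G2] [InnerProductSpace ℝ G2] [CompleteSpace G2]
    {k1 : H1 → G1} {X1 : Ω' → H1} {k2 : H2 → G2} {X2 : Ω' → H2}

lemma ctr_mem2 (h1 : MemLp (fun ω => k1 (X1 ω)) 2 P) :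
    MemLp (fun ω => ctrKer P k1 X1 (X1 ω)) 2 P := by
  exact h1.sub (memLp_const (meanElem P k1 X1))

lemma crossCov_inner (h1 : MemLp (fun ω => k1 (X1 ω)) 2 P)
    (h2 : MemLp (fun ω => k2 (X2 ω)) 2 P) (u : G1) (v : G2) :
    ⟪u, crossCov P k1 X1 k2 X2 v⟫ =
      ∫ ω, ⟪ctrKer P k1 X1 (X1 ω), u⟫ * ⟪ctrKer P k2 X2 (X2 ω), v⟫ ∂P := by
  set c1 : Ω' → G1 := fun ω => ctrKer P k1 X1 (X1 ω) with hc1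
  set c2 : Ω' → G2 := fun ω => ctrKer P k2 X2 (X2 ω) with hc2
  have hm1 : MemLp c1 2 P := ctr_mem2 h1
  have hm2 : MemLp c2 2 P := ctr_mem2 h2
  have hop : Integrable (fun ω => rankOne (c1 ω) (c2 ω)) P := by
    refine Integrable.mono' (g := fun ω => ‖c2 ω‖ * ‖c1 ω‖) ?_ ?_ ?_
    · exact mul_int2 hm2.norm hm1.norm
    · exact continuous_rankOne.comp_aestronglyMeasurable
        (hm1.aestronglyMeasurable.prodMk hm2.aestronglyMeasurable)
    · exact Eventually.of_forall fun ω => le_of_eq (norm_rankOne _ _)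
  have happ : crossCov P k1 X1 k2 X2 v = ∫ ω, ⟪c2 ω, v⟫ • c1 ω ∂P := by
    rw [crossCov, ContinuousLinearMap.integral_apply hop v]
    exact integral_congr_ae (Eventually.of_forall fun ω => rfl)
  have hφ : MemLp (fun ω => ⟪c2 ω, v⟫) 2 P := by
    simpa [real_inner_comm] using hm2.const_inner v
  have hint : Integrable (fun ω => ⟪c2 ω, v⟫ • c1 ω) P :=
    memLp_one_iff_integrable.mp (hm1.smul (r := 1) hφ (hpqr := ⟨by simp [ENNReal.inv_two_add_inv_two]⟩))
  calc ⟪u, crossCov P k1 X1 k2 X2 v⟫ = ⟪u, ∫ ω, ⟪c2 ω, v⟫ • c1 ω ∂P⟫ := by rw [happ]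
    _ = ∫ ω, ⟪u, ⟪c2 ω, v⟫ • c1 ω⟫ ∂P := (integral_inner hint u).symm
    _ = ∫ ω, ⟪c1 ω, u⟫ * ⟪c2 ω, v⟫ ∂P := by
        refine integral_congr_ae (Eventually.of_forall fun ω => ?_)
        show ⟪u, ⟪c2 ω, v⟫ • c1 ω⟫ = ⟪c1 ω, u⟫ * ⟪c2 ω, v⟫
        rw [real_inner_smul_right, real_inner_comm (c1 ω) u]; ring

lemma crossCov_inner' (h1 : MemLp (fun ω => k1 (X1 ω)) 2 P)
    (h2 : MemLp (fun ω => k2 (X2 ω)) 2 P) (u : G1) (v : G2) :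
    ⟪u, crossCov P k1 X1 k2 X2 v⟫ =
      (∫ ω, ⟪k1 (X1 ω), u⟫ * ⟪k2 (X2 ω), v⟫ ∂P) -
        (∫ ω, ⟪k1 (X1 ω), u⟫ ∂P) * ∫ ω, ⟪k2 (X2 ω), v⟫ ∂P := by
  have hmean1 : ⟪meanElem P k1 X1, u⟫ = ∫ ω, ⟪k1 (X1 ω), u⟫ ∂P := by
    rw [meanElem, real_inner_comm, ← integral_inner (h1.integrable one_le_two) u]
    exact integral_congr_ae (Eventually.of_forall fun ω => real_inner_comm _ _)
  have hmean2 : ⟪meanElem P k2 X2, v⟫ = ∫ ω, ⟪k2 (X2 ω), v⟫ ∂P := by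
    rw [meanElem, real_inner_comm, ← integral_inner (h2.integrable one_le_two) v]
    exact integral_congr_ae (Eventually.of_forall fun ω => real_inner_comm _ _)
  rw [crossCov_inner h1 h2]
  calc ∫ ω, ⟪ctrKer P k1 X1 (X1 ω), u⟫ * ⟪ctrKer P k2 X2 (X2 ω), v⟫ ∂P
      = ∫ ω, (⟪k1 (X1 ω), u⟫ - ∫ ω', ⟪k1 (X1 ω'), u⟫ ∂P) *
          (⟪k2 (X2 ω), v⟫ - ∫ ω', ⟪k2 (X2 ω'), v⟫ ∂P) ∂P := by
        refine integral_congr_ae (Eventually.of_forall fun ω => ?_)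
        show ⟪ctrKer P k1 X1 (X1 ω), u⟫ * ⟪ctrKer P k2 X2 (X2 ω), v⟫ = _
        rw [ctrKer, ctrKer, inner_sub_left, inner_sub_left, hmean1, hmean2]
    _ = _ := integral_mul_sub_consts (inner_mem2 h1 u) (inner_mem2 h2 v)
end CC

lemma abs_ind_le {W : Type*} (A : Set W) (x : W) :
    |Set.indicator A (fun _ => (1:ℝ)) x| ≤ 1 := by
  by_cases h : x ∈ A <;> simp [h]

lemma integrable_bdd {f : Ω' → ℝ} (hf : AEStronglyMeasurable f P) {C : ℝ}
    (h : ∀ᵐ ω ∂P, |f ω| ≤ C) : Integrable f P :=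
  Integrable.mono' (integrable_const C) hf (by simpa [Real.norm_eq_abs] using h)

lemma abs_mul_le_of_le_one_left {c x : ℝ} (hc : |c| ≤ 1) : |c * x| ≤ |x| := by
  rw [abs_mul]
  exact mul_le_of_le_one_left (abs_nonneg x) hc

lemma integral_mul_condexp {m : MeasurableSpace Ω'} (hle : m ≤ m0)
    {w G : Ω' → ℝ} (hw : StronglyMeasurable[m] w) (hG : Integrable G P)
    (hwG : Integrable (fun ω => w ω * G ω) P) :
    ∫ ω, w ω * G ω ∂P = ∫ ω, w ω * (P[G|m]) ω ∂P := by
  haveI : SigmaFinite (P.trim hle) := by infer_instance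
  have h1 := condExp_mul_of_stronglyMeasurable_left (μ := P) hw hwG hG
  calc ∫ ω, w ω * G ω ∂P = ∫ ω, (P[w * G|m]) ω ∂P := (integral_condExp hle).symm
    _ = ∫ ω, w ω * (P[G|m]) ω ∂P := integral_congr_ae h1

lemma integral_comp_mul_congr {S : Type*} [MeasurableSpace S] {T : Ω' → S} (hT : Measurable T)
    {g : S → ℝ} (hg : Measurable g) {m1 m2 : Ω' → ℝ}
    (hm1 : Integrable m1 P) (hm2 : Integrable m2 P)
    (hgm1 : Integrable (fun ω => g (T ω) * m1 ω) P)
    (hgm2 : Integrable (fun ω => g (T ω) * m2 ω) P)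
    (h : ∀ A : Set S, MeasurableSet A →
      ∫ ω, Set.indicator A (fun _ => (1:ℝ)) (T ω) * m1 ω ∂P =
      ∫ ω, Set.indicator A (fun _ => (1:ℝ)) (T ω) * m2 ω ∂P) :
    ∫ ω, g (T ω) * m1 ω ∂P = ∫ ω, g (T ω) * m2 ω ∂P := by
  have hle : MeasurableSpace.comap T inferInstance ≤ m0 := hT.comap_le
  haveI : SigmaFinite (P.trim hle) := by infer_instance
  have hTm : Measurable[MeasurableSpace.comap T inferInstance] T := fun s hs => ⟨s, hs, rfl⟩
  have hce : (P[m1|MeasurableSpace.comap T inferInstance]) =ᵐ[P]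
      (P[m2|MeasurableSpace.comap T inferInstance]) := by
    refine ae_eq_condExp_of_forall_setIntegral_eq hle hm2
      (fun s _ _ => integrable_condExp.integrableOn) (fun s hs _ => ?_) ?_
    · obtain ⟨A, hA, rfl⟩ := hs
      have e1 : ∀ mm : Ω' → ℝ, Integrable mm P → ∫ ω in T ⁻¹' A, mm ω ∂P =
          ∫ ω, Set.indicator A (fun _ => (1:ℝ)) (T ω) * mm ω ∂P := by
        intro mm hmm
        rw [← integral_indicator (hT hA)]
        refine integral_congr_ae (Eventually.of_forall fun ω => ?_)
        by_cases hω : T ω ∈ A <;>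
          simp [Set.indicator_of_mem, Set.indicator_of_notMem, hω, Set.mem_preimage]
      rw [setIntegral_condExp hle hm1 ⟨A, hA, rfl⟩, e1 m1 hm1, e1 m2 hm2, ← h A hA]
    · exact stronglyMeasurable_condExp.aestronglyMeasurable
  have hgT : StronglyMeasurable[MeasurableSpace.comap T inferInstance] fun ω => g (T ω) :=
    (hg.comp hTm).stronglyMeasurable
  rw [integral_mul_condexp hle hgT hm1 hgm1, integral_mul_condexp hle hgT hm2 hgm2]
  exact integral_congr_ae ((hce.mono fun ω hω => by simp only [hω]))

section Steps
variable {HX HY HZ : Type*} [MeasurableSpace HX] [MeasurableSpace HY] [MeasurableSpace HZ]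
variable {X : Ω' → HX} {Y : Ω' → HY} {Z : Ω' → HZ}

lemma condexp_abs_le_one {m : MeasurableSpace Ω'} (hle : m ≤ m0) {a : Ω' → ℝ}
    (ha : AEStronglyMeasurable[m0] a P) (ha1 : ∀ ω, |a ω| ≤ 1) :
    ∀ᵐ ω ∂P, |(P[a|m]) ω| ≤ 1 := by
  haveI : SigmaFinite (P.trim hle) := by infer_instance
  have hai : Integrable a P := integrable_bdd (m0 := m0) ha (Eventually.of_forall ha1)
  have h1 : (P[a|m]) ≤ᵐ[P] P[(fun _ => (1:ℝ))|m] :=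
    condExp_mono hai (integrable_const 1) (Eventually.of_forall fun ω => (abs_le.mp (ha1 ω)).2)
  have h2 : P[(fun _ => (-1:ℝ))|m] ≤ᵐ[P] (P[a|m]) :=
    condExp_mono (integrable_const (-1)) hai (Eventually.of_forall fun ω => (abs_le.mp (ha1 ω)).1)
  rw [condExp_const hle] at h1
  rw [condExp_const hle] at h2
  filter_upwards [h1, h2] with ω e1 e2
  exact abs_le.2 ⟨e2, e1⟩

lemma step0 (hX : Measurable X) (hY : Measurable Y) (hZ : Measurable Z)
    {a b : Ω' → ℝ} (ha : Measurable a) (hb : Measurable b)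
    (ha1 : ∀ ω, |a ω| ≤ 1) (hb1 : ∀ ω, |b ω| ≤ 1)
    (hab : P[fun ω => a ω * b ω|MeasurableSpace.comap Z inferInstance] =ᵐ[P]
      fun ω => (P[a|MeasurableSpace.comap Z inferInstance]) ω *
        (P[b|MeasurableSpace.comap Z inferInstance]) ω)
    (S : Set HZ) (hS : MeasurableSet S) :
    ∫ ω, Set.indicator S (fun _ => (1:ℝ)) (Z ω) * (a ω * b ω) ∂P =
    ∫ ω, Set.indicator S (fun _ => (1:ℝ)) (Z ω) *
      ((P[a|MeasurableSpace.comap Z inferInstance]) ω * b ω) ∂P := by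
  have hle : MeasurableSpace.comap Z inferInstance ≤ m0 := hZ.comap_le
  haveI : SigmaFinite (P.trim hle) := by infer_instance
  have hZm : Measurable[MeasurableSpace.comap Z inferInstance] Z := fun s hs => ⟨s, hs, rfl⟩
  have hiS : Measurable fun ω => Set.indicator S (fun _ => (1:ℝ)) (Z ω) :=
    (measurable_const.indicator hS).comp hZ
  have hiSm : StronglyMeasurable[MeasurableSpace.comap Z inferInstance]
      fun ω => Set.indicator S (fun _ => (1:ℝ)) (Z ω) :=
    (((measurable_const.indicator hS)).comp hZm).stronglyMeasurable
  have hai : Integrable a P := integrable_bdd (m0 := m0) ha.aestronglyMeasurable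
    (Eventually.of_forall ha1)
  have hbi : Integrable b P := integrable_bdd (m0 := m0) hb.aestronglyMeasurable
    (Eventually.of_forall hb1)
  have habi : Integrable (fun ω => a ω * b ω) P := by
    refine integrable_bdd (C := 1) (ha.mul hb).aestronglyMeasurable
      (Eventually.of_forall fun ω => ?_)
    rw [abs_mul]
    exact mul_le_one₀ (ha1 ω) (abs_nonneg _) (hb1 ω)
  have hSabi : Integrable (fun ω => Set.indicator S (fun _ => (1:ℝ)) (Z ω) * (a ω * b ω)) P := by
    refine integrable_bdd (C := 1) (hiS.mul (ha.mul hb)).aestronglyMeasurable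
      (Eventually.of_forall fun ω => ?_)
    rw [abs_mul, abs_mul]
    exact mul_le_one₀ (abs_ind_le _ _) (by positivity)
      (mul_le_one₀ (ha1 ω) (abs_nonneg _) (hb1 ω))
  have hca_bd := condexp_abs_le_one (P := P) hle ha.aestronglyMeasurable ha1
  have hcb_bd := condexp_abs_le_one (P := P) hle hb.aestronglyMeasurable hb1
  have hca_sm : AEStronglyMeasurable (P[a|MeasurableSpace.comap Z inferInstance]) P :=
    (stronglyMeasurable_condExp.mono hle).aestronglyMeasurable
  have hcb_sm : AEStronglyMeasurable (P[b|MeasurableSpace.comap Z inferInstance]) P :=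
    (stronglyMeasurable_condExp.mono hle).aestronglyMeasurable
  calc ∫ ω, Set.indicator S (fun _ => (1:ℝ)) (Z ω) * (a ω * b ω) ∂P
      = ∫ ω, Set.indicator S (fun _ => (1:ℝ)) (Z ω) *
          (P[fun ω' => a ω' * b ω'|MeasurableSpace.comap Z inferInstance]) ω ∂P :=
        integral_mul_condexp hle hiSm habi hSabi
    _ = ∫ ω, (Set.indicator S (fun _ => (1:ℝ)) (Z ω) *
          (P[a|MeasurableSpace.comap Z inferInstance]) ω) *
          (P[b|MeasurableSpace.comap Z inferInstance]) ω ∂P := by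
        refine integral_congr_ae (hab.mono fun ω h => ?_)
        simp only [h]; ring
    _ = ∫ ω, (Set.indicator S (fun _ => (1:ℝ)) (Z ω) *
          (P[a|MeasurableSpace.comap Z inferInstance]) ω) * b ω ∂P := by
        refine (integral_mul_condexp hle (hiSm.mul stronglyMeasurable_condExp) hbi ?_).symm
        refine integrable_bdd (C := 1) ((hiS.aestronglyMeasurable.mul hca_sm).mul
          hb.aestronglyMeasurable) ?_
        filter_upwards [hca_bd] with ω hω
        simp only [Pi.mul_apply]
        rw [abs_mul, abs_mul]
        exact mul_le_one₀ (mul_le_one₀ (abs_ind_le _ _) (abs_nonneg _) hω)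
          (by positivity) (hb1 ω)
    _ = ∫ ω, Set.indicator S (fun _ => (1:ℝ)) (Z ω) *
          ((P[a|MeasurableSpace.comap Z inferInstance]) ω * b ω) ∂P := by
        refine integral_congr_ae (Eventually.of_forall fun ω => ?_)
        show _ * _ * _ = _ * (_ * _)
        ring

lemma crux (hX : Measurable X) (hY : Measurable Y) (hZ : Measurable Z)
    {a : Ω' → ℝ} (ha : Measurable a) (ha1 : ∀ ω, |a ω| ≤ 1)
    {γ : HY → ℝ} {ρ : HZ → ℝ} (hγ : Measurable γ) (hρ : Measurable ρ)
    (hρZ : Integrable (fun ω => ρ (Z ω)) P)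
    (hγρ : Integrable (fun ω => γ (Y ω) * ρ (Z ω)) P)
    (hab : ∀ B : Set HY, MeasurableSet B →
      P[fun ω => a ω * Set.indicator B (fun _ => (1:ℝ)) (Y ω)|
          MeasurableSpace.comap Z inferInstance] =ᵐ[P]
      fun ω => (P[a|MeasurableSpace.comap Z inferInstance]) ω *
        (P[fun ω' => Set.indicator B (fun _ => (1:ℝ)) (Y ω')|
          MeasurableSpace.comap Z inferInstance]) ω) :
    ∫ ω, γ (Y ω) * (a ω * ρ (Z ω)) ∂P =
      ∫ ω, γ (Y ω) * ((P[a|MeasurableSpace.comap Z inferInstance]) ω * ρ (Z ω)) ∂P := by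
  have hle : MeasurableSpace.comap Z inferInstance ≤ m0 := hZ.comap_le
  haveI : SigmaFinite (P.trim hle) := by infer_instance
  have hca_bd := condexp_abs_le_one (P := P) hle ha.aestronglyMeasurable ha1
  have hca_sm : AEStronglyMeasurable (P[a|MeasurableSpace.comap Z inferInstance]) P :=
    (stronglyMeasurable_condExp.mono hle).aestronglyMeasurable
  have step1 : ∀ B : Set HY, MeasurableSet B →
      ∫ ω, ρ (Z ω) * (a ω * Set.indicator B (fun _ => (1:ℝ)) (Y ω)) ∂P =
      ∫ ω, ρ (Z ω) * ((P[a|MeasurableSpace.comap Z inferInstance]) ω *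
        Set.indicator B (fun _ => (1:ℝ)) (Y ω)) ∂P := by
    intro B hB
    have hiB : Measurable fun ω => Set.indicator B (fun _ => (1:ℝ)) (Y ω) :=
      (measurable_const.indicator hB).comp hY
    refine integral_comp_mul_congr hZ hρ ?_ ?_ ?_ ?_ (fun S hS =>
      step0 hX hY hZ ha hiB ha1 (fun ω => abs_ind_le _ _) (hab B hB) S hS)
    · refine integrable_bdd (C := 1) (ha.mul hiB).aestronglyMeasurable
        (Eventually.of_forall fun ω => ?_)
      rw [abs_mul]
      exact mul_le_one₀ (ha1 ω) (abs_nonneg _) (abs_ind_le _ _)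
    · refine integrable_bdd (C := 1) (hca_sm.mul hiB.aestronglyMeasurable) ?_
      filter_upwards [hca_bd] with ω hω
      rw [abs_mul]
      exact mul_le_one₀ hω (abs_nonneg _) (abs_ind_le _ _)
    · refine Integrable.mono' hρZ.abs
        (((hρ.comp hZ).mul (ha.mul hiB)).aestronglyMeasurable)
        (Eventually.of_forall fun ω => ?_)
      rw [Real.norm_eq_abs, mul_comm, abs_mul]
      calc |a ω * Set.indicator B (fun _ => (1:ℝ)) (Y ω)| * |ρ (Z ω)| ≤ 1 * |ρ (Z ω)| := by
            refine mul_le_mul_of_nonneg_right ?_ (abs_nonneg _)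
            rw [abs_mul]
            exact mul_le_one₀ (ha1 ω) (abs_nonneg _) (abs_ind_le _ _)
        _ = |ρ (Z ω)| := one_mul _
    · refine Integrable.mono' hρZ.abs
        (((hρ.comp hZ).aestronglyMeasurable.mul (hca_sm.mul hiB.aestronglyMeasurable)))
        ?_
      filter_upwards [hca_bd] with ω hω
      rw [Real.norm_eq_abs, mul_comm, abs_mul]
      calc |(P[a|MeasurableSpace.comap Z inferInstance]) ω *
            Set.indicator B (fun _ => (1:ℝ)) (Y ω)| * |ρ (Z ω)| ≤ 1 * |ρ (Z ω)| := by
            refine mul_le_mul_of_nonneg_right ?_ (abs_nonneg _)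
            rw [abs_mul]
            exact mul_le_one₀ hω (abs_nonneg _) (abs_ind_le _ _)
        _ = |ρ (Z ω)| := one_mul _
  refine integral_comp_mul_congr hY hγ ?_ ?_ ?_ ?_ (fun B hB => ?_)
  · exact Integrable.mono' hρZ.abs ((ha.mul (hρ.comp hZ)).aestronglyMeasurable)
      (Eventually.of_forall fun ω => by
        rw [Real.norm_eq_abs]; exact abs_mul_le_of_le_one_left (ha1 ω))
  · refine Integrable.mono' hρZ.abs (hca_sm.mul (hρ.comp hZ).aestronglyMeasurable) ?_
    filter_upwards [hca_bd] with ω hω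
    rw [Real.norm_eq_abs]
    exact abs_mul_le_of_le_one_left hω
  · refine Integrable.mono' hγρ.abs
      ((hγ.comp hY).mul (ha.mul (hρ.comp hZ))).aestronglyMeasurable
      (Eventually.of_forall fun ω => ?_)
    rw [Real.norm_eq_abs]
    calc |γ (Y ω) * (a ω * ρ (Z ω))| = |a ω * (γ (Y ω) * ρ (Z ω))| := by ring_nf
      _ ≤ |γ (Y ω) * ρ (Z ω)| := abs_mul_le_of_le_one_left (ha1 ω)
  · refine Integrable.mono' hγρ.abs
      ((hγ.comp hY).aestronglyMeasurable.mul
        (hca_sm.mul (hρ.comp hZ).aestronglyMeasurable)) ?_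
    filter_upwards [hca_bd] with ω hω
    rw [Real.norm_eq_abs]
    calc |γ (Y ω) * ((P[a|MeasurableSpace.comap Z inferInstance]) ω * ρ (Z ω))|
        = |(P[a|MeasurableSpace.comap Z inferInstance]) ω * (γ (Y ω) * ρ (Z ω))| := by ring_nf
      _ ≤ |γ (Y ω) * ρ (Z ω)| := abs_mul_le_of_le_one_left hω
  · calc ∫ ω, Set.indicator B (fun _ => (1:ℝ)) (Y ω) * (a ω * ρ (Z ω)) ∂P
        = ∫ ω, ρ (Z ω) * (a ω * Set.indicator B (fun _ => (1:ℝ)) (Y ω)) ∂P :=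
          integral_congr_ae (Eventually.of_forall fun ω => by ring)
      _ = ∫ ω, ρ (Z ω) * ((P[a|MeasurableSpace.comap Z inferInstance]) ω *
            Set.indicator B (fun _ => (1:ℝ)) (Y ω)) ∂P := step1 B hB
      _ = ∫ ω, Set.indicator B (fun _ => (1:ℝ)) (Y ω) *
            ((P[a|MeasurableSpace.comap Z inferInstance]) ω * ρ (Z ω)) ∂P :=
          integral_congr_ae (Eventually.of_forall fun ω => by ring)

/-- The core conditional-independence integral identity. -/
lemma core_ci (hX : Measurable X) (hY : Measurable Y) (hZ : Measurable Z)
    (hCI : CondIndepGiven P (MeasurableSpace.comap Z inferInstance) X Y)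
    {φ : HX → ℝ} {γ : HY → ℝ} {ψ δ β : HZ → ℝ}
    (hφ : Measurable φ) (hγ : Measurable γ) (hψ : Measurable ψ) (hδ : Measurable δ)
    (hβ : Measurable β)
    (hint1 : Integrable (fun ω => ψ (Z ω) * δ (Z ω)) P)
    (hint2 : Integrable (fun ω => γ (Y ω) * δ (Z ω)) P)
    (hint3 : Integrable (fun ω => ψ (Z ω) * (γ (Y ω) * δ (Z ω))) P)
    (hint4 : Integrable (fun ω => ψ (Z ω) * β (Z ω)) P)
    (hint5 : Integrable (fun ω => φ (X ω) * (ψ (Z ω) * (γ (Y ω) * δ (Z ω)))) P)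
    (hint6 : Integrable (fun ω => φ (X ω) * (ψ (Z ω) * β (Z ω))) P)
    (hβ_ce : (fun ω => β (Z ω)) =ᵐ[P]
      condExp (MeasurableSpace.comap Z inferInstance) P (fun ω => γ (Y ω) * δ (Z ω))) :
    ∫ ω, φ (X ω) * (ψ (Z ω) * (γ (Y ω) * δ (Z ω))) ∂P =
      ∫ ω, φ (X ω) * (ψ (Z ω) * β (Z ω)) ∂P := by
  have hle : MeasurableSpace.comap Z inferInstance ≤ m0 := hZ.comap_le
  haveI : SigmaFinite (P.trim hle) := by infer_instance
  have hZm : Measurable[MeasurableSpace.comap Z inferInstance] Z := fun s hs => ⟨s, hs, rfl⟩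
  have key : ∀ A : Set HX, MeasurableSet A →
      ∫ ω, Set.indicator A (fun _ => (1:ℝ)) (X ω) *
        (ψ (Z ω) * (γ (Y ω) * δ (Z ω))) ∂P =
      ∫ ω, Set.indicator A (fun _ => (1:ℝ)) (X ω) * (ψ (Z ω) * β (Z ω)) ∂P := by
    intro A hA
    have hiA : Measurable fun ω => Set.indicator A (fun _ => (1:ℝ)) (X ω) :=
      (measurable_const.indicator hA).comp hX
    have hcA_bd := condexp_abs_le_one (P := P) hle hiA.aestronglyMeasurable
      (fun ω => abs_ind_le _ _)
    have hcA_sm : AEStronglyMeasurable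
        (P[fun ω => Set.indicator A (fun _ => (1:ℝ)) (X ω)|
          MeasurableSpace.comap Z inferInstance]) P :=
      (stronglyMeasurable_condExp.mono hle).aestronglyMeasurable
    have hcruxint : Integrable (fun ω => γ (Y ω) * (ψ (Z ω) * δ (Z ω))) P :=
      hint3.congr (Eventually.of_forall fun ω => by ring)
    calc ∫ ω, Set.indicator A (fun _ => (1:ℝ)) (X ω) *
          (ψ (Z ω) * (γ (Y ω) * δ (Z ω))) ∂P
        = ∫ ω, γ (Y ω) * (Set.indicator A (fun _ => (1:ℝ)) (X ω) *
            (ψ (Z ω) * δ (Z ω))) ∂P :=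
          integral_congr_ae (Eventually.of_forall fun ω => by ring)
      _ = ∫ ω, γ (Y ω) * ((P[fun ω' => Set.indicator A (fun _ => (1:ℝ)) (X ω')|
            MeasurableSpace.comap Z inferInstance]) ω * (ψ (Z ω) * δ (Z ω))) ∂P := by
          refine crux hX hY hZ hiA (fun ω => abs_ind_le _ _) hγ (hψ.mul hδ) ?_ ?_
            (fun B hB => hCI A B hA hB)
          · exact hint1
          · exact hcruxint
      _ = ∫ ω, ((P[fun ω' => Set.indicator A (fun _ => (1:ℝ)) (X ω')|
            MeasurableSpace.comap Z inferInstance]) ω * ψ (Z ω)) *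
            (γ (Y ω) * δ (Z ω)) ∂P :=
          integral_congr_ae (Eventually.of_forall fun ω => by ring)
      _ = ∫ ω, ((P[fun ω' => Set.indicator A (fun _ => (1:ℝ)) (X ω')|
            MeasurableSpace.comap Z inferInstance]) ω * ψ (Z ω)) *
            (P[fun ω' => γ (Y ω') * δ (Z ω')|
              MeasurableSpace.comap Z inferInstance]) ω ∂P := by
          refine integral_mul_condexp hle
            (stronglyMeasurable_condExp.mul ((hψ.comp hZm).stronglyMeasurable)) hint2 ?_
          refine Integrable.mono' hint3.abs
            ((hcA_sm.mul (hψ.comp hZ).aestronglyMeasurable).mul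
              ((hγ.comp hY).mul (hδ.comp hZ)).aestronglyMeasurable) ?_
          filter_upwards [hcA_bd] with ω hω
          rw [Real.norm_eq_abs]
          calc |(P[fun ω' => Set.indicator A (fun _ => (1:ℝ)) (X ω')|
                MeasurableSpace.comap Z inferInstance]) ω * ψ (Z ω) *
                (γ (Y ω) * δ (Z ω))|
              = |(P[fun ω' => Set.indicator A (fun _ => (1:ℝ)) (X ω')|
                MeasurableSpace.comap Z inferInstance]) ω *
                (ψ (Z ω) * (γ (Y ω) * δ (Z ω)))| := by ring_nf
            _ ≤ |ψ (Z ω) * (γ (Y ω) * δ (Z ω))| := abs_mul_le_of_le_one_left hω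
      _ = ∫ ω, ((P[fun ω' => Set.indicator A (fun _ => (1:ℝ)) (X ω')|
            MeasurableSpace.comap Z inferInstance]) ω * ψ (Z ω)) * β (Z ω) ∂P := by
          refine integral_congr_ae (hβ_ce.mono fun ω hω => ?_)
          simp only [← hω]
      _ = ∫ ω, (ψ (Z ω) * β (Z ω)) *
            (P[fun ω' => Set.indicator A (fun _ => (1:ℝ)) (X ω')|
              MeasurableSpace.comap Z inferInstance]) ω ∂P :=
          integral_congr_ae (Eventually.of_forall fun ω => by ring)
      _ = ∫ ω, (ψ (Z ω) * β (Z ω)) * Set.indicator A (fun _ => (1:ℝ)) (X ω) ∂P := by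
          refine (integral_mul_condexp hle
            (((hψ.comp hZm).mul (hβ.comp hZm)).stronglyMeasurable) ?_ ?_).symm
          · exact integrable_bdd (C := 1) hiA.aestronglyMeasurable
              (Eventually.of_forall fun ω => abs_ind_le _ _)
          · refine Integrable.mono' hint4.abs
              (((hψ.comp hZ).mul (hβ.comp hZ)).mul hiA).aestronglyMeasurable
              (Eventually.of_forall fun ω => ?_)
            rw [Real.norm_eq_abs, mul_comm]
            exact abs_mul_le_of_le_one_left (abs_ind_le _ _)
      _ = ∫ ω, Set.indicator A (fun _ => (1:ℝ)) (X ω) * (ψ (Z ω) * β (Z ω)) ∂P :=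
          integral_congr_ae (Eventually.of_forall fun ω => by ring)
  exact integral_comp_mul_congr hX hφ hint3 hint4 hint5 hint6 key

end Steps
end Helpers

theorem statement7
    (P : Measure Ω) [IsProbabilityMeasure P]
    {HX HY HZ GX GY GZ GXd GYd : Type*}
    [NormedAddCommGroup HX] [InnerProductSpace ℝ HX] [CompleteSpace HX]
    [SecondCountableTopology HX] [MeasurableSpace HX] [BorelSpace HX]
    [NormedAddCommGroup HY] [InnerProductSpace ℝ HY] [CompleteSpace HY]
    [SecondCountableTopology HY] [MeasurableSpace HY] [BorelSpace HY]
    [NormedAddCommGroup HZ] [InnerProductSpace ℝ HZ] [CompleteSpace HZ]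
    [SecondCountableTopology HZ] [MeasurableSpace HZ] [BorelSpace HZ]
    [NormedAddCommGroup GX] [InnerProductSpace ℝ GX] [CompleteSpace GX]
    [SecondCountableTopology GX] [MeasurableSpace GX] [BorelSpace GX]
    [NormedAddCommGroup GY] [InnerProductSpace ℝ GY] [CompleteSpace GY]
    [SecondCountableTopology GY] [MeasurableSpace GY] [BorelSpace GY]
    [NormedAddCommGroup GZ] [InnerProductSpace ℝ GZ] [CompleteSpace GZ]
    [SecondCountableTopology GZ] [MeasurableSpace GZ] [BorelSpace GZ]
    [NormedAddCommGroup GXd] [InnerProductSpace ℝ GXd] [CompleteSpace GXd]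
    [SecondCountableTopology GXd] [MeasurableSpace GXd] [BorelSpace GXd]
    [NormedAddCommGroup GYd] [InnerProductSpace ℝ GYd] [CompleteSpace GYd]
    [SecondCountableTopology GYd] [MeasurableSpace GYd] [BorelSpace GYd]
    (X : Ω → HX) (Y : Ω → HY) (Z : Ω → HZ)
    (hX : Measurable X) (hY : Measurable Y) (hZ : Measurable Z)
    -- feature maps of κ_X, κ_Y, κ_Z with dense span
    (kX : HX → GX) (kY : HY → GY) (kZ : HZ → GZ)
    (hkX : Measurable kX) (hkY : Measurable kY) (hkZ : Measurable kZ)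
    (hdX : (Submodule.span ℝ (Set.range kX)).topologicalClosure = ⊤)
    (hdY : (Submodule.span ℝ (Set.range kY)).topologicalClosure = ⊤)
    (hdZ : (Submodule.span ℝ (Set.range kZ)).topologicalClosure = ⊤)
    -- feature maps of the conjoined product kernels κ_Ẍ = κ_X κ_Z, κ_Ÿ = κ_Y κ_Z
    (kXd : HX × HZ → GXd) (kYd : HY × HZ → GYd)
    (hkXd : Measurable kXd) (hkYd : Measurable kYd)
    (hprodX : ∀ (x x' : HX) (z z' : HZ),
      ⟪kXd (x, z), kXd (x', z')⟫ = ⟪kX x, kX x'⟫ * ⟪kZ z, kZ z'⟫)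
    (hprodY : ∀ (y y' : HY) (z z' : HZ),
      ⟪kYd (y, z), kYd (y', z')⟫ = ⟪kY y, kY y'⟫ * ⟪kZ z, kZ z'⟫)
    (hdXd : (Submodule.span ℝ (Set.range kXd)).topologicalClosure = ⊤)
    (hdYd : (Submodule.span ℝ (Set.range kYd)).topologicalClosure = ⊤)
    -- moment assumptions E[κ_Ẍ(Ẍ,Ẍ)] < ∞, E[κ_Ÿ(Ÿ,Ÿ)] < ∞, E[κ_Z(Z,Z)] < ∞
    (hmXd : Integrable (fun ω => ⟪kXd (X ω, Z ω), kXd (X ω, Z ω)⟫) P)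
    (hmYd : Integrable (fun ω => ⟪kYd (Y ω, Z ω), kYd (Y ω, Z ω)⟫) P)
    (hmZ : Integrable (fun ω => ⟪kZ (Z ω), kZ (Z ω)⟫) P)
    -- conditional expectation assumption for G_Ẍ and G_Ÿ
    (hCEXd : ∀ g : GXd, ∃ h : GZ,
      (fun ω => ⟪kZ (Z ω), h⟫) =ᵐ[P]
        condExp (MeasurableSpace.comap Z inferInstance) P
          (fun ω => ⟪kXd (X ω, Z ω), g⟫))
    (hCEYd : ∀ g : GYd, ∃ h : GZ,
      (fun ω => ⟪kZ (Z ω), h⟫) =ᵐ[P]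
        condExp (MeasurableSpace.comap Z inferInstance) P
          (fun ω => ⟪kYd (Y ω, Z ω), g⟫))
    -- the Moore–Penrose inverse of Σ_ZZ
    (dag : GZ →ₗ[ℝ] GZ)
    (hdag : IsMoorePenroseInv (crossCov P kZ Z kZ Z) dag) :
    -- X ⟂⟂ Y | Z  ⟹  Σ_{ẌŸ|Z} = 0
    CondIndepGiven P (MeasurableSpace.comap Z inferInstance) X Y →
      ∀ v : GYd,
        crossCov P kXd (fun ω => (X ω, Z ω)) kYd (fun ω => (Y ω, Z ω)) v
          - crossCov P kXd (fun ω => (X ω, Z ω)) kZ Z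
              (dag (crossCov P kZ Z kYd (fun ω => (Y ω, Z ω)) v)) = 0 := by
  intro hCI v
  -- setup
  have hle : MeasurableSpace.comap Z inferInstance ≤ ‹MeasurableSpace Ω› := hZ.comap_le
  haveI : SigmaFinite (P.trim hle) := by infer_instance
  have hZm : Measurable[MeasurableSpace.comap Z inferInstance] Z := fun s hs => ⟨s, hs, rfl⟩
  set Xd : Ω → HX × HZ := fun ω => (X ω, Z ω) with hXd_def
  set Yd : Ω → HY × HZ := fun ω => (Y ω, Z ω) with hYd_def
  have hXdm : Measurable Xd := hX.prodMk hZ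
  have hYdm : Measurable Yd := hY.prodMk hZ
  have hK1 : MemLp (fun ω => kXd (Xd ω)) 2 P := mem2_of_inner_self hkXd hXdm hmXd
  have hK2 : MemLp (fun ω => kYd (Yd ω)) 2 P := mem2_of_inner_self hkYd hYdm hmYd
  have hKZ : MemLp (fun ω => kZ (Z ω)) 2 P := mem2_of_inner_self hkZ hZ hmZ
  have hf2 : ∀ u : GXd, MemLp (fun ω => ⟪kXd (Xd ω), u⟫) 2 P := fun u => inner_mem2 hK1 u
  have hg2 : ∀ w : GYd, MemLp (fun ω => ⟪kYd (Yd ω), w⟫) 2 P := fun w => inner_mem2 hK2 w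
  have hz2 : ∀ w : GZ, MemLp (fun ω => ⟪kZ (Z ω), w⟫) 2 P := fun w => inner_mem2 hKZ w
  choose hu hu_spec using hCEXd
  choose hv hv_spec using hCEYd
  -- measurability of ζ functions w.r.t. σ(Z)
  have hzm : ∀ w : GZ, StronglyMeasurable[MeasurableSpace.comap Z inferInstance]
      (fun ω => ⟪kZ (Z ω), w⟫) := by
    intro w
    have h1 : Measurable fun z : HZ => ⟪kZ z, w⟫ :=
      ((continuous_id.inner continuous_const).measurable).comp hkZ
    exact (h1.comp hZm).stronglyMeasurable
  -- pull-out identity specialized to ζ weights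
  have hpull : ∀ (w : GZ) (G : Ω → ℝ), Integrable G P →
      Integrable (fun ω => ⟪kZ (Z ω), w⟫ * G ω) P →
      ∫ ω, ⟪kZ (Z ω), w⟫ * G ω ∂P =
        ∫ ω, ⟪kZ (Z ω), w⟫ * (P[G|MeasurableSpace.comap Z inferInstance]) ω ∂P :=
    fun w G hGi hwG => integral_mul_condexp hle (hzm w) hGi hwG
  -- mean identities
  have hmean_u : ∀ u : GXd,
      ∫ ω, ⟪kXd (Xd ω), u⟫ ∂P = ∫ ω, ⟪kZ (Z ω), hu u⟫ ∂P := by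
    intro u
    calc ∫ ω, ⟪kXd (Xd ω), u⟫ ∂P
        = ∫ ω, (P[fun ω' => ⟪kXd (Xd ω'), u⟫|MeasurableSpace.comap Z inferInstance]) ω ∂P :=
          (integral_condExp hle).symm
      _ = ∫ ω, ⟪kZ (Z ω), hu u⟫ ∂P := (integral_congr_ae (hu_spec u)).symm
  have hmean_v : ∀ w : GYd,
      ∫ ω, ⟪kYd (Yd ω), w⟫ ∂P = ∫ ω, ⟪kZ (Z ω), hv w⟫ ∂P := by
    intro w
    calc ∫ ω, ⟪kYd (Yd ω), w⟫ ∂P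
        = ∫ ω, (P[fun ω' => ⟪kYd (Yd ω'), w⟫|MeasurableSpace.comap Z inferInstance]) ω ∂P :=
          (integral_condExp hle).symm
      _ = ∫ ω, ⟪kZ (Z ω), hv w⟫ ∂P := (integral_congr_ae (hv_spec w)).symm
  -- swap identities (pull-out + conditional expectation hypothesis)
  have hswap_u : ∀ (u : GXd) (w : GZ),
      ∫ ω, ⟪kXd (Xd ω), u⟫ * ⟪kZ (Z ω), w⟫ ∂P =
      ∫ ω, ⟪kZ (Z ω), hu u⟫ * ⟪kZ (Z ω), w⟫ ∂P := by
    intro u w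
    calc ∫ ω, ⟪kXd (Xd ω), u⟫ * ⟪kZ (Z ω), w⟫ ∂P
        = ∫ ω, ⟪kZ (Z ω), w⟫ * ⟪kXd (Xd ω), u⟫ ∂P :=
          integral_congr_ae (Eventually.of_forall fun ω => mul_comm _ _)
      _ = ∫ ω, ⟪kZ (Z ω), w⟫ *
            (P[fun ω' => ⟪kXd (Xd ω'), u⟫|MeasurableSpace.comap Z inferInstance]) ω ∂P :=
          hpull w _ ((hf2 u).integrable one_le_two) (mul_int2 (hz2 w) (hf2 u))
      _ = ∫ ω, ⟪kZ (Z ω), w⟫ * ⟪kZ (Z ω), hu u⟫ ∂P :=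
          integral_congr_ae ((hu_spec u).mono fun ω h => congrArg (fun t => ⟪kZ (Z ω), w⟫ * t) h.symm)
      _ = ∫ ω, ⟪kZ (Z ω), hu u⟫ * ⟪kZ (Z ω), w⟫ ∂P :=
          integral_congr_ae (Eventually.of_forall fun ω => mul_comm _ _)
  have hswap_v : ∀ (g : GYd) (w : GZ),
      ∫ ω, ⟪kZ (Z ω), w⟫ * ⟪kYd (Yd ω), g⟫ ∂P =
      ∫ ω, ⟪kZ (Z ω), w⟫ * ⟪kZ (Z ω), hv g⟫ ∂P := by
    intro g w
    calc ∫ ω, ⟪kZ (Z ω), w⟫ * ⟪kYd (Yd ω), g⟫ ∂P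
        = ∫ ω, ⟪kZ (Z ω), w⟫ *
            (P[fun ω' => ⟪kYd (Yd ω'), g⟫|MeasurableSpace.comap Z inferInstance]) ω ∂P :=
          hpull w _ ((hg2 g).integrable one_le_two) (mul_int2 (hz2 w) (hg2 g))
      _ = ∫ ω, ⟪kZ (Z ω), w⟫ * ⟪kZ (Z ω), hv g⟫ ∂P :=
          integral_congr_ae ((hv_spec g).mono fun ω h => congrArg (fun t => ⟪kZ (Z ω), w⟫ * t) h.symm)
  -- operator identity Σ_{ZŸ} g = Σ_ZZ (hv g)
  have A_ZY : ∀ g : GYd, crossCov P kZ Z kYd Yd g = crossCov P kZ Z kZ Z (hv g) := by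
    intro g
    refine ext_inner_left ℝ fun w => ?_
    rw [crossCov_inner' hKZ hK2 w g, crossCov_inner' hKZ hKZ w (hv g)]
    rw [hswap_v g w]
    have e2 : ∫ ω, ⟪kYd (Yd ω), g⟫ ∂P = ∫ ω, ⟪kZ (Z ω), hv g⟫ ∂P := hmean_v g
    rw [e2]
  -- representation of the inner products against the difference operator
  have hDab : ∀ (u : GXd) (g : GYd),
      ⟪u, crossCov P kXd Xd kYd Yd g -
        crossCov P kXd Xd kZ Z (dag (crossCov P kZ Z kYd Yd g))⟫ =
      ∫ ω, (⟪kXd (Xd ω), u⟫ - ⟪kZ (Z ω), hu u⟫) * ⟪kYd (Yd ω), g⟫ ∂P := by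
    intro u g
    rw [inner_sub_right, A_ZY g]
    have hT2 : ⟪u, crossCov P kXd Xd kZ Z (dag (crossCov P kZ Z kZ Z (hv g)))⟫ =
        (∫ ω, ⟪kZ (Z ω), hu u⟫ * ⟪kZ (Z ω), hv g⟫ ∂P) -
          (∫ ω, ⟪kZ (Z ω), hu u⟫ ∂P) * ∫ ω, ⟪kZ (Z ω), hv g⟫ ∂P := by
      rw [crossCov_inner' hK1 hKZ u (dag (crossCov P kZ Z kZ Z (hv g)))]
      rw [hswap_u u (dag (crossCov P kZ Z kZ Z (hv g))), hmean_u u]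
      rw [← crossCov_inner' hKZ hKZ (hu u) (dag (crossCov P kZ Z kZ Z (hv g)))]
      rw [hdag.1 (hv g)]
      rw [crossCov_inner' hKZ hKZ (hu u) (hv g)]
    rw [hT2, crossCov_inner' hK1 hK2 u g]
    have h1 : ∫ ω, ⟪kZ (Z ω), hu u⟫ * ⟪kYd (Yd ω), g⟫ ∂P =
        ∫ ω, ⟪kZ (Z ω), hu u⟫ * ⟪kZ (Z ω), hv g⟫ ∂P := hswap_v g (hu u)
    have h2 := hmean_u u
    have h3 := hmean_v g
    have h4 : ∫ ω, (⟪kXd (Xd ω), u⟫ - ⟪kZ (Z ω), hu u⟫) * ⟪kYd (Yd ω), g⟫ ∂P =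
        (∫ ω, ⟪kXd (Xd ω), u⟫ * ⟪kYd (Yd ω), g⟫ ∂P) -
          ∫ ω, ⟪kZ (Z ω), hu u⟫ * ⟪kYd (Yd ω), g⟫ ∂P := by
      rw [← integral_sub (mul_int2 (hf2 u) (hg2 g)) (mul_int2 (hz2 (hu u)) (hg2 g))]
      exact integral_congr_ae (Eventually.of_forall fun ω => by ring)
    rw [h4, h1, h2, h3]
    ring
  -- core conditional independence computation on generators
  have hcore : ∀ (p : HX × HZ) (q : HY × HZ),
      ∫ ω, ⟪kXd (Xd ω), kXd p⟫ * ⟪kYd (Yd ω), kYd q⟫ ∂P =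
      ∫ ω, ⟪kXd (Xd ω), kXd p⟫ * ⟪kZ (Z ω), hv (kYd q)⟫ ∂P := by
    rintro ⟨x0, z0⟩ ⟨y0, z1⟩
    have hφm : Measurable fun x => ⟪kX x, kX x0⟫ :=
      ((continuous_id.inner continuous_const).measurable).comp hkX
    have hψm : Measurable fun z => ⟪kZ z, kZ z0⟫ :=
      ((continuous_id.inner continuous_const).measurable).comp hkZ
    have hγm : Measurable fun y => ⟪kY y, kY y0⟫ :=
      ((continuous_id.inner continuous_const).measurable).comp hkY
    have hδm : Measurable fun z => ⟪kZ z, kZ z1⟫ :=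
      ((continuous_id.inner continuous_const).measurable).comp hkZ
    have hβm : Measurable fun z => ⟪kZ z, hv (kYd (y0, z1))⟫ :=
      ((continuous_id.inner continuous_const).measurable).comp hkZ
    have hgeq : ∀ ω, ⟪kYd (Yd ω), kYd (y0, z1)⟫ =
        ⟪kY (Y ω), kY y0⟫ * ⟪kZ (Z ω), kZ z1⟫ := fun ω => hprodY (Y ω) y0 (Z ω) z1
    have hfeq : ∀ ω, ⟪kXd (Xd ω), kXd (x0, z0)⟫ =
        ⟪kX (X ω), kX x0⟫ * ⟪kZ (Z ω), kZ z0⟫ := fun ω => hprodX (X ω) x0 (Z ω) z0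
    have hβ_ce : (fun ω => ⟪kZ (Z ω), hv (kYd (y0, z1))⟫) =ᵐ[P]
        condExp (MeasurableSpace.comap Z inferInstance) P
          (fun ω => ⟪kY (Y ω), kY y0⟫ * ⟪kZ (Z ω), kZ z1⟫) := by
      have heq : (fun ω => ⟪kY (Y ω), kY y0⟫ * ⟪kZ (Z ω), kZ z1⟫) =
          fun ω => ⟪kYd (Yd ω), kYd (y0, z1)⟫ := funext fun ω => (hgeq ω).symm
      rw [heq]
      exact hv_spec (kYd (y0, z1))
    have hint1 : Integrable (fun ω => ⟪kZ (Z ω), kZ z0⟫ * ⟪kZ (Z ω), kZ z1⟫) P :=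
      mul_int2 (hz2 (kZ z0)) (hz2 (kZ z1))
    have hint2 : Integrable (fun ω => ⟪kY (Y ω), kY y0⟫ * ⟪kZ (Z ω), kZ z1⟫) P :=
      ((hg2 (kYd (y0, z1))).integrable one_le_two).congr
        (Eventually.of_forall fun ω => hgeq ω)
    have hint3 : Integrable (fun ω => ⟪kZ (Z ω), kZ z0⟫ *
        (⟪kY (Y ω), kY y0⟫ * ⟪kZ (Z ω), kZ z1⟫)) P :=
      (mul_int2 (hz2 (kZ z0)) (hg2 (kYd (y0, z1)))).congr
        (Eventually.of_forall fun ω => by simp only [hgeq])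
    have hint4 : Integrable (fun ω => ⟪kZ (Z ω), kZ z0⟫ *
        ⟪kZ (Z ω), hv (kYd (y0, z1))⟫) P :=
      mul_int2 (hz2 (kZ z0)) (hz2 (hv (kYd (y0, z1))))
    have hint5 : Integrable (fun ω => ⟪kX (X ω), kX x0⟫ * (⟪kZ (Z ω), kZ z0⟫ *
        (⟪kY (Y ω), kY y0⟫ * ⟪kZ (Z ω), kZ z1⟫))) P :=
      (mul_int2 (hf2 (kXd (x0, z0))) (hg2 (kYd (y0, z1)))).congr
        (Eventually.of_forall fun ω => by simp only [hgeq, hfeq]; ring)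
    have hint6 : Integrable (fun ω => ⟪kX (X ω), kX x0⟫ * (⟪kZ (Z ω), kZ z0⟫ *
        ⟪kZ (Z ω), hv (kYd (y0, z1))⟫)) P :=
      (mul_int2 (hf2 (kXd (x0, z0))) (hz2 (hv (kYd (y0, z1))))).congr
        (Eventually.of_forall fun ω => by simp only [hfeq]; ring)
    have h := core_ci hX hY hZ hCI hφm hγm hψm hδm hβm hint1 hint2 hint3 hint4 hint5
      hint6 hβ_ce
    calc ∫ ω, ⟪kXd (Xd ω), kXd (x0, z0)⟫ * ⟪kYd (Yd ω), kYd (y0, z1)⟫ ∂P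
        = ∫ ω, ⟪kX (X ω), kX x0⟫ * (⟪kZ (Z ω), kZ z0⟫ *
            (⟪kY (Y ω), kY y0⟫ * ⟪kZ (Z ω), kZ z1⟫)) ∂P :=
          integral_congr_ae (Eventually.of_forall fun ω => by
            simp only [hgeq, hfeq]; ring)
      _ = ∫ ω, ⟪kX (X ω), kX x0⟫ * (⟪kZ (Z ω), kZ z0⟫ *
            ⟪kZ (Z ω), hv (kYd (y0, z1))⟫) ∂P := h
      _ = ∫ ω, ⟪kXd (Xd ω), kXd (x0, z0)⟫ * ⟪kZ (Z ω), hv (kYd (y0, z1))⟫ ∂P :=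
          integral_congr_ae (Eventually.of_forall fun ω => by simp only [hfeq]; ring)
  -- the difference operator vanishes on generators of GYd
  have hgen : ∀ q : HY × HZ,
      crossCov P kXd Xd kYd Yd (kYd q) -
        crossCov P kXd Xd kZ Z (dag (crossCov P kZ Z kYd Yd (kYd q))) = 0 := by
    intro q
    refine eq_zero_of_orth hdXd fun p => ?_
    rw [hDab (kXd p) (kYd q)]
    have e0 : ∫ ω, (⟪kXd (Xd ω), kXd p⟫ - ⟪kZ (Z ω), hu (kXd p)⟫) *
        ⟪kYd (Yd ω), kYd q⟫ ∂P =
        (∫ ω, ⟪kXd (Xd ω), kXd p⟫ * ⟪kYd (Yd ω), kYd q⟫ ∂P) -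
          ∫ ω, ⟪kZ (Z ω), hu (kXd p)⟫ * ⟪kYd (Yd ω), kYd q⟫ ∂P := by
      rw [← integral_sub (mul_int2 (hf2 (kXd p)) (hg2 (kYd q)))
        (mul_int2 (hz2 (hu (kXd p))) (hg2 (kYd q)))]
      exact integral_congr_ae (Eventually.of_forall fun ω => by ring)
    rw [e0, hcore p q, hswap_v (kYd q) (hu (kXd p)), hswap_u (kXd p) (hv (kYd q))]
    exact sub_self _
  -- extend to all of GYd by continuity/density, for every u
  have hall : ∀ (u : GXd) (g : GYd),
      ⟪u, crossCov P kXd Xd kYd Yd g -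
        crossCov P kXd Xd kZ Z (dag (crossCov P kZ Z kYd Yd g))⟫ = 0 := by
    intro u g
    have hc2 : MemLp (fun ω => ⟪kXd (Xd ω), u⟫ - ⟪kZ (Z ω), hu u⟫) 2 P :=
      (hf2 u).sub (hz2 (hu u))
    have hΘint : Integrable
        (fun ω => (⟪kXd (Xd ω), u⟫ - ⟪kZ (Z ω), hu u⟫) • kYd (Yd ω)) P :=
      smul_int2 hc2 hK2
    have hrep : ∀ g' : GYd,
        ∫ ω, (⟪kXd (Xd ω), u⟫ - ⟪kZ (Z ω), hu u⟫) * ⟪kYd (Yd ω), g'⟫ ∂P =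
        ⟪(∫ ω, (⟪kXd (Xd ω), u⟫ - ⟪kZ (Z ω), hu u⟫) • kYd (Yd ω) ∂P), g'⟫ := by
      intro g'
      rw [real_inner_comm, ← integral_inner hΘint g']
      refine integral_congr_ae (Eventually.of_forall fun ω => ?_)
      show (⟪kXd (Xd ω), u⟫ - ⟪kZ (Z ω), hu u⟫) * ⟪kYd (Yd ω), g'⟫ =
        ⟪g', (⟪kXd (Xd ω), u⟫ - ⟪kZ (Z ω), hu u⟫) • kYd (Yd ω)⟫
      rw [real_inner_smul_right, real_inner_comm (kYd (Yd ω)) g']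
    have hΘ0 : (∫ ω, (⟪kXd (Xd ω), u⟫ - ⟪kZ (Z ω), hu u⟫) • kYd (Yd ω) ∂P) = 0 := by
      refine eq_zero_of_orth hdYd fun q => ?_
      rw [real_inner_comm, ← hrep (kYd q), ← hDab u (kYd q), hgen q, inner_zero_right]
    rw [hDab u g, hrep g, hΘ0, inner_zero_left]
  -- conclude
  have h0 := hall (crossCov P kXd Xd kYd Yd v -
    crossCov P kXd Xd kZ Z (dag (crossCov P kZ Z kYd Yd v))) v
  exact inner_self_eq_zero.mp h0
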